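/- Let P ⊂ ℝⁿ be a lattice polytope of dimension n and let π : ℝⁿ → ℝʳ be a lattice projection. Let Γ' ⊂ ℕ × ℤʳ be the image of Γ_P under id_ℕ × π. Then the saturation of Γ' equals Γ_{π(P)}: {γ ∈ ℕ × ℤʳ : m·γ ∈ Γ' for some positive integer m} = Σ({1} × π(P)) ∩ (ℕ × ℤʳ). -/

import Mathlib

open Set Function

noncomputable section

/-- The real vector with the same coordinates as an integer vector. -/
def toRealVec {n : ℕ} (u : Fin n → ℤ) : Fin n → ℝ := fun i => (u i : ℝ)

/-- A lattice polytope in `ℝⁿ` is the convex hull of finitely many points of `ℤⁿ`. -/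
def IsLatticePolytope {n : ℕ} (P : Set (Fin n → ℝ)) : Prop :=
  ∃ S : Finset (Fin n → ℤ), S.Nonempty ∧ P = convexHull ℝ (↑(S.image toRealVec))

/-- `Σ(S)`: the closed convex cone spanned by a subset `S` of a real vector space,
i.e. the closure of the set of all nonnegative multiples of convex combinations of
points of `S`. -/
def coneSpan {E : Type*} [AddCommGroup E] [Module ℝ E] [TopologicalSpace E]
    (S : Set E) : Set E :=
  closure {x | ∃ t : ℝ, 0 ≤ t ∧ ∃ y ∈ convexHull ℝ S, x = t • y}

/-- The real point of `ℝ × ℝⁿ` corresponding to a point of `ℤ × ℤⁿ`. -/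
def liftReal {n : ℕ} (γ : ℤ × (Fin n → ℤ)) : ℝ × (Fin n → ℝ) :=
  ((γ.1 : ℝ), toRealVec γ.2)

/-- `Γ_P = Σ({1} × P) ∩ (ℕ × ℤⁿ)`, realized as the set of `γ ∈ ℤ × ℤⁿ` with
nonnegative first coordinate whose real lift lies in the cone `Σ({1} × P)`. -/
def GammaP {n : ℕ} (P : Set (Fin n → ℝ)) : Set (ℤ × (Fin n → ℤ)) :=
  {γ | 0 ≤ γ.1 ∧ liftReal γ ∈ coneSpan (({1} : Set ℝ) ×ˢ P)}


/-- The `ℝ`-linear map `ℝⁿ → ℝᵐ` induced by an integer matrix. -/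
def realMap {m n : ℕ} (A : Matrix (Fin m) (Fin n) ℤ) : (Fin n → ℝ) → (Fin m → ℝ) :=
  fun x => (A.map (fun z : ℤ => (z : ℝ))).mulVec x

/-! ### Auxiliary lemmas -/

lemma realMap_toRealVec {m n : ℕ} (A : Matrix (Fin m) (Fin n) ℤ) (u : Fin n → ℤ) :
    realMap A (toRealVec u) = toRealVec (A.mulVec u) := by
  funext i
  simp [realMap, toRealVec, Matrix.mulVec, dotProduct, Matrix.map_apply]

lemma realMap_smul {m n : ℕ} (A : Matrix (Fin m) (Fin n) ℤ) (c : ℝ) (x : Fin n → ℝ) :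
    realMap A (c • x) = c • realMap A x := by
  simp [realMap, Matrix.mulVec_smul]

lemma toRealVec_zsmul {n : ℕ} (z : ℤ) (v : Fin n → ℤ) :
    toRealVec (z • v) = (z : ℝ) • toRealVec v := by
  funext i
  simp [toRealVec]

/-- Characterization of membership in the cone over `{1} × Q` for `Q` compact convex. -/
lemma mem_coneSpan_iff {k : ℕ} {Q : Set (Fin k → ℝ)} (hc : IsCompact Q) (hconv : Convex ℝ Q)
    (z : ℝ × (Fin k → ℝ)) :
    z ∈ coneSpan (({1} : Set ℝ) ×ˢ Q) ↔ ∃ t : ℝ, 0 ≤ t ∧ ∃ y ∈ Q, z = t • ((1 : ℝ), y) := by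
  have hhull : convexHull ℝ (({1} : Set ℝ) ×ˢ Q) = ({1} : Set ℝ) ×ˢ Q := by
    rw [convexHull_prod, convexHull_singleton, hconv.convexHull_eq]
  have hset : {x : ℝ × (Fin k → ℝ) | ∃ t : ℝ, 0 ≤ t ∧
      ∃ y ∈ convexHull ℝ (({1} : Set ℝ) ×ˢ Q), x = t • y} =
      {z : ℝ × (Fin k → ℝ) | ∃ t : ℝ, 0 ≤ t ∧ ∃ y ∈ Q, z = t • ((1 : ℝ), y)} := by
    rw [hhull]
    ext x
    constructor
    · rintro ⟨t, ht, ⟨y1, y2⟩, ⟨hy1, hy2⟩, rfl⟩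
      simp only [Set.mem_singleton_iff] at hy1
      subst hy1
      exact ⟨t, ht, y2, hy2, rfl⟩
    · rintro ⟨t, ht, y, hy, rfl⟩
      exact ⟨t, ht, (1, y), ⟨rfl, hy⟩, rfl⟩
  rw [coneSpan, hset]
  have hclosed : IsClosed {z : ℝ × (Fin k → ℝ) | ∃ t : ℝ, 0 ≤ t ∧ ∃ y ∈ Q, z = t • ((1 : ℝ), y)} := by
    apply IsSeqClosed.isClosed
    intro f z hf hz
    choose t ht y hy hfy using hf
    have htf : ∀ m, t m = (f m).1 := by
      intro m; rw [hfy m]; simp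
    have ht1 : Filter.Tendsto t Filter.atTop (nhds z.1) := by
      have : Filter.Tendsto (fun m => (f m).1) Filter.atTop (nhds z.1) :=
        (continuous_fst.tendsto z).comp hz
      simpa only [← htf] using this
    obtain ⟨y₀, hy₀, φ, hφ, hyconv⟩ := hc.tendsto_subseq hy
    have h1 : Filter.Tendsto (fun m => f (φ m)) Filter.atTop (nhds (z.1 • ((1 : ℝ), y₀))) := by
      have : Filter.Tendsto (fun m => t (φ m) • ((1 : ℝ), y (φ m))) Filter.atTop
          (nhds (z.1 • ((1 : ℝ), y₀))) := by
        apply Filter.Tendsto.smul (ht1.comp hφ.tendsto_atTop)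
        rw [nhds_prod_eq]
        exact tendsto_const_nhds.prodMk hyconv
      simpa only [← hfy] using this
    have h2 : Filter.Tendsto (fun m => f (φ m)) Filter.atTop (nhds z) :=
      hz.comp hφ.tendsto_atTop
    have hzeq : z = z.1 • ((1 : ℝ), y₀) := tendsto_nhds_unique h2 h1
    have hz1 : 0 ≤ z.1 := ge_of_tendsto' ht1 ht
    exact ⟨z.1, hz1, y₀, hy₀, hzeq⟩
  rw [hclosed.closure_eq]
  rfl

section
open Matrix
lemma rat_weights {r : ℕ} (u : Finset (Fin r → ℝ)) (q : (Fin r → ℝ) → (Fin r → ℚ))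
    (hq : ∀ x ∈ u, (fun i => ((q x i : ℝ))) = x)
    (hAI : AffineIndependent ℝ ((↑) : u → (Fin r → ℝ))) (c : Fin r → ℚ)
    (hc : (fun i => (c i : ℝ)) ∈ convexHull ℝ (u : Set (Fin r → ℝ))) :
    ∃ μ : (Fin r → ℝ) → ℚ, (∀ x ∈ u, 0 ≤ μ x) ∧ (∑ x ∈ u, μ x) = 1 ∧
      (∀ i, ∑ x ∈ u, μ x * q x i = c i) := by
  classical
  rw [Finset.convexHull_eq] at hc
  obtain ⟨w, hw0, hw1, hwc⟩ := hc
  rw [Finset.centerMass_eq_of_sum_1 _ _ hw1] at hwc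
  have hwcoord : ∀ i, ∑ x ∈ u, w x * (q x i : ℝ) = (c i : ℝ) := by
    intro i
    have h1 := congrFun hwc i
    rw [Finset.sum_apply] at h1
    rw [← h1]
    apply Finset.sum_congr rfl
    intro x hx
    have h2 : ((q x i : ℝ)) = x i := congrFun (hq x hx) i
    simp only [id_eq, Pi.smul_apply, smul_eq_mul, h2]
  set M : Matrix (Option (Fin r)) {x // x ∈ u} ℚ :=
    fun i j => Option.casesOn i 1 (fun i' => q j.1 i') with hM
  set b : Option (Fin r) → ℚ := fun i => Option.casesOn i 1 c with hb
  set Mr : Matrix (Option (Fin r)) {x // x ∈ u} ℝ := M.map (fun x : ℚ => (x : ℝ)) with hMr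
  set lam : {x // x ∈ u} → ℝ := fun j => w j.1 with hlam
  have hMl : Mr.mulVec lam = fun i => ((b i : ℝ)) := by
    funext i
    cases i with
    | none =>
        simp only [Matrix.mulVec, dotProduct, hMr, Matrix.map_apply]
        simp only [Matrix.mulVec, dotProduct, hMr, hM, Matrix.map_apply, hb]
        simp only [Rat.cast_one, one_mul]
        rw [Finset.sum_coe_sort u (fun x => w x)]
        exact hw1
    | some i' =>
        simp only [Matrix.mulVec, dotProduct, hMr, Matrix.map_apply]
        simp only [Matrix.mulVec, dotProduct, hMr, hM, Matrix.map_apply, hb]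
        rw [Finset.sum_coe_sort u (fun x => ((q x i' : ℝ)) * w x)]
        rw [← hwcoord i']
        apply Finset.sum_congr rfl
        intro x hx
        ring
  have hMinj : ∀ v : {x // x ∈ u} → ℝ, Mr.mulVec v = 0 → v = 0 := by
    intro v hv
    have hsum : ∑ j : {x // x ∈ u}, v j = 0 := by
      have := congrFun hv none
      simp only [Matrix.mulVec, dotProduct, hMr, Matrix.map_apply] at this
      simpa [Matrix.mulVec, dotProduct, hMr, hM, Matrix.map_apply] using this
    have hcomb : ∑ j : {x // x ∈ u}, v j • (j.1 : Fin r → ℝ) = 0 := by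
      funext i
      rw [Finset.sum_apply, Pi.zero_apply]
      have h3 := congrFun hv (some i)
      simp only [Matrix.mulVec, dotProduct, hMr, Matrix.map_apply] at h3
      simp only [Matrix.mulVec, dotProduct, hMr, hM, Matrix.map_apply,
        Pi.zero_apply] at h3
      rw [← h3]
      apply Finset.sum_congr rfl
      intro j _
      have h2 : ((q j.1 i : ℝ)) = j.1 i := congrFun (hq j.1 j.2) i
      simp only [Pi.smul_apply, smul_eq_mul, h2]
      ring
    have := affineIndependent_iff.mp hAI Finset.univ v hsum hcomb
    funext j
    exact this j (Finset.mem_univ j)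
  set G : Matrix {x // x ∈ u} {x // x ∈ u} ℚ := Mᵀ * M with hG
  have hGcast : G.map (fun x : ℚ => (x : ℝ)) = Mrᵀ * Mr := by
    have : G.map (Rat.castHom ℝ) = (Mᵀ.map (Rat.castHom ℝ)) * (M.map (Rat.castHom ℝ)) :=
      Matrix.map_mul
    simpa [Matrix.transpose_map] using this
  have hGrinj : ∀ v : {x // x ∈ u} → ℝ, (Mrᵀ * Mr).mulVec v = 0 → v = 0 := by
    intro v hv
    apply hMinj
    have hker := Matrix.ker_mulVecLin_transpose_mul_self Mr
    have hv' : v ∈ LinearMap.ker (Mrᵀ * Mr).mulVecLin := hv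
    rw [hker] at hv'
    exact hv'
  have hdetR : (Mrᵀ * Mr).det ≠ 0 := by
    intro h0
    obtain ⟨v, hvne, hv⟩ := (Matrix.exists_mulVec_eq_zero_iff).mpr h0
    exact hvne (hGrinj v hv)
  have hdet : G.det ≠ 0 := by
    intro h0
    apply hdetR
    rw [← hGcast]
    have : ((Rat.castHom ℝ) G.det) = (G.map (Rat.castHom ℝ)).det := RingHom.map_det _ _
    rw [show G.map (fun x : ℚ => (x : ℝ)) = G.map (Rat.castHom ℝ) from rfl, ← this, h0]
    simp
  have hunit : IsUnit G.det := isUnit_iff_ne_zero.mpr hdet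
  set μ0 : {x // x ∈ u} → ℚ := G⁻¹.mulVec (Mᵀ.mulVec b) with hμ0
  have hGμ : G.mulVec μ0 = Mᵀ.mulVec b := by
    rw [hμ0, Matrix.mulVec_mulVec, Matrix.mul_nonsing_inv _ hunit, Matrix.one_mulVec]
  have hcastμ : (fun j => ((μ0 j : ℝ))) = lam := by
    have h1 : (Mrᵀ * Mr).mulVec (fun j => ((μ0 j : ℝ))) = (Mrᵀ * Mr).mulVec lam := by
      have hL : (Mrᵀ * Mr).mulVec (fun j => ((μ0 j : ℝ))) = Mrᵀ.mulVec (fun i => ((b i : ℝ))) := by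
        rw [← hGcast]
        funext i
        have := (RingHom.map_mulVec (Rat.castHom ℝ) G μ0 i).symm
        rw [show (⇑(Rat.castHom ℝ) ∘ μ0) = (fun j => ((μ0 j : ℝ))) from rfl] at this
        rw [show G.map (fun x : ℚ => (x : ℝ)) = G.map (Rat.castHom ℝ) from rfl, this, hGμ,
          RingHom.map_mulVec]
        rw [Matrix.transpose_map]
        rfl
      have hR : (Mrᵀ * Mr).mulVec lam = Mrᵀ.mulVec (fun i => ((b i : ℝ))) := by
        rw [← Matrix.mulVec_mulVec, hMl]
      rw [hL, hR]
    have h2 : (fun j => ((μ0 j : ℝ))) - lam = 0 := by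
      apply hGrinj
      rw [Matrix.mulVec_sub, h1, sub_self]
    funext j
    have := congrFun h2 j
    simp only [Pi.sub_apply, Pi.zero_apply, sub_eq_zero] at this
    exact this
  refine ⟨fun x => if h : x ∈ u then μ0 ⟨x, h⟩ else 0, ?_, ?_, ?_⟩
  · intro x hx
    show 0 ≤ if h : x ∈ u then μ0 ⟨x, h⟩ else 0
    rw [dif_pos hx]
    have h5 : ((μ0 ⟨x, hx⟩ : ℝ)) = w x := congrFun hcastμ ⟨x, hx⟩
    have h6 := hw0 x hx
    rw [← h5] at h6
    exact_mod_cast h6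
  · have key : ∀ x ∈ u, ((if h : x ∈ u then μ0 ⟨x, h⟩ else 0 : ℚ) : ℝ) = w x := by
      intro x hx
      rw [dif_pos hx]
      exact congrFun hcastμ ⟨x, hx⟩
    apply Rat.cast_injective (α := ℝ)
    push_cast
    rw [Finset.sum_congr rfl key, hw1]
  · intro i
    have key : ∀ x ∈ u, ((if h : x ∈ u then μ0 ⟨x, h⟩ else 0 : ℚ) : ℝ) * (q x i : ℝ)
        = w x * (q x i : ℝ) := by
      intro x hx
      rw [dif_pos hx]
      rw [show ((μ0 ⟨x, hx⟩ : ℝ)) = w x from congrFun hcastμ ⟨x, hx⟩]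
    apply Rat.cast_injective (α := ℝ)
    push_cast
    rw [Finset.sum_congr rfl key, hwcoord i]
end


/-- Let `P ⊆ ℝⁿ` be a lattice polytope of dimension `n` and
`π : ℝⁿ → ℝʳ` a lattice projection (induced by a surjective homomorphism `ℤⁿ → ℤʳ`
given by an integer matrix `A`). Let `Γ'` be the image of `Γ_P` under `id × π`.
Then the saturation of `Γ'`, namely
`{γ ∈ ℕ × ℤʳ : m·γ ∈ Γ' for some positive integer m}`, equals
`Γ_{π(P)} = Σ({1} × π(P)) ∩ (ℕ × ℤʳ)`. -/
theorem saturation_gamma_image_eq (n r : ℕ) (P : Set (Fin n → ℝ))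
    (hP : IsLatticePolytope P) (hdim : affineSpan ℝ P = ⊤)
    (A : Matrix (Fin r) (Fin n) ℤ)
    (hA : Surjective (A.mulVec : (Fin n → ℤ) → (Fin r → ℤ))) :
    {γ : ℤ × (Fin r → ℤ) | 0 ≤ γ.1 ∧ ∃ m : ℕ, 0 < m ∧
        (m : ℤ) • γ ∈ (fun γ : ℤ × (Fin n → ℤ) => (γ.1, A.mulVec γ.2)) '' GammaP P} =
      GammaP (realMap A '' P) := by
  classical
  obtain ⟨S, hSne, hPS⟩ := hP
  set Ar : Matrix (Fin r) (Fin n) ℝ := A.map (fun z : ℤ => (z : ℝ)) with hAr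
  have hrealMap : realMap A = ⇑Ar.mulVecLin := by
    funext x
    rfl
  have hPc : IsCompact P := by
    rw [hPS]
    exact (S.image toRealVec).finite_toSet.isCompact_convexHull (𝕜 := ℝ)
  have hPconv : Convex ℝ P := by
    rw [hPS]; exact convex_convexHull ℝ _
  have hPne : P.Nonempty := by
    obtain ⟨p, hp⟩ := hSne
    refine ⟨toRealVec p, ?_⟩
    rw [hPS]
    exact subset_convexHull ℝ _ (Finset.mem_coe.mpr (Finset.mem_image_of_mem _ hp))
  have hQc : IsCompact (realMap A '' P) := by
    rw [hrealMap]
    exact hPc.image Ar.mulVecLin.continuous_of_finiteDimensional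
  have hQconv : Convex ℝ (realMap A '' P) := by
    rw [hrealMap]
    exact hPconv.linear_image Ar.mulVecLin
  ext ⟨a, v⟩
  simp only [Set.mem_setOf_eq, GammaP, liftReal]
  constructor
  · rintro ⟨ha, m, hm, ⟨⟨b, w⟩, ⟨hb0, hbw⟩, heq⟩⟩
    rw [Prod.ext_iff] at heq
    obtain ⟨hb, hAw⟩ := heq
    simp only [Prod.fst, Prod.snd, smul_eq_mul, Prod.smul_fst, Prod.smul_snd] at hb hAw
    rw [mem_coneSpan_iff hPc hPconv] at hbw
    obtain ⟨t, ht, y, hyP, heq2⟩ := hbw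
    rw [Prod.ext_iff] at heq2
    obtain ⟨heq2a, heq2b⟩ := heq2
    simp only [liftReal, Prod.smul_fst, Prod.smul_snd, smul_eq_mul, mul_one] at heq2a heq2b
    -- t = b
    have hmne : ((m : ℝ)) ≠ 0 := by positivity
    refine ⟨ha, ?_⟩
    rw [mem_coneSpan_iff hQc hQconv]
    refine ⟨(a : ℝ), by exact_mod_cast ha, realMap A y, ⟨y, hyP, rfl⟩, ?_⟩
    rw [Prod.ext_iff]
    constructor
    · simp
    · simp only [Prod.smul_snd]
      apply smul_right_injective (Fin r → ℝ) hmne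
      calc (m : ℝ) • toRealVec v = toRealVec ((m : ℤ) • v) := by
              rw [toRealVec_zsmul]; push_cast; ring_nf
        _ = toRealVec (A.mulVec w) := by rw [hAw]
        _ = realMap A (toRealVec w) := (realMap_toRealVec A w).symm
        _ = realMap A (t • y) := by rw [heq2b]
        _ = t • realMap A y := realMap_smul A t y
        _ = (m : ℝ) • ((a : ℝ) • realMap A y) := by
              rw [← heq2a, smul_smul]
              congr 1
              push_cast [hb]
              ring
  · rintro ⟨ha, hv⟩
    rw [mem_coneSpan_iff hQc hQconv] at hv
    obtain ⟨t, ht, y, hyQ, heq⟩ := hv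
    rw [Prod.ext_iff] at heq
    obtain ⟨heqa, heqb⟩ := heq
    simp only [Prod.smul_fst, Prod.smul_snd, smul_eq_mul, mul_one] at heqa heqb
    -- t = a
    rcases eq_or_lt_of_le ha with ha0 | hapos
    · -- a = 0, hence v = 0
      have hv0 : v = 0 := by
        have : toRealVec v = 0 := by
          rw [heqb, ← heqa, ← ha0]
          simp
        funext i
        have := congrFun this i
        simpa [toRealVec] using this
      refine ⟨ha, 1, one_pos, (0, 0), ⟨le_refl 0, ?_⟩, ?_⟩
      · apply subset_closure
        obtain ⟨p₀, hp₀⟩ := hPne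
        refine ⟨0, le_refl 0, (1, p₀), subset_convexHull ℝ _ ⟨rfl, hp₀⟩, ?_⟩
        rw [Prod.ext_iff]
        refine ⟨by simp [liftReal], ?_⟩
        funext i
        simp [liftReal, toRealVec]
      · simp [Matrix.mulVec_zero, hv0, ← ha0]
    · -- a > 0
      obtain ⟨x, hxP, rfl⟩ := hyQ
      have hane : ((a : ℝ)) ≠ 0 := by positivity
      have haqne : ((a : ℚ)) ≠ 0 := by positivity
      have hxv : toRealVec v = (a : ℝ) • realMap A x := by
        rw [heqb, ← heqa]
      set c : Fin r → ℚ := fun i => (v i : ℚ) / (a : ℚ) with hc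
      have hcreal : (fun i => ((c i : ℝ))) = realMap A x := by
        funext i
        have := congrFun hxv i
        simp only [toRealVec, Pi.smul_apply, smul_eq_mul] at this
        rw [hc]
        push_cast
        rw [this]
        field_simp
      have hchull : (fun i => ((c i : ℝ))) ∈
          convexHull ℝ (realMap A '' ↑(S.image toRealVec)) := by
        rw [hcreal]
        have himg : realMap A '' P = convexHull ℝ (realMap A '' ↑(S.image toRealVec)) := by
          rw [hPS, hrealMap, Ar.mulVecLin.image_convexHull]
        rw [← himg]
        exact ⟨x, hxP, rfl⟩
      rw [convexHull_eq_union] at hchull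
      simp only [Set.mem_iUnion] at hchull
      obtain ⟨u, hu, hAI, hcu⟩ := hchull
      -- choose integer representatives for the points of u
      have hrep : ∀ x' : Fin r → ℝ, ∃ p : Fin n → ℤ,
          x' ∈ u → (p ∈ S ∧ toRealVec (A.mulVec p) = x') := by
        intro x'
        by_cases hx' : x' ∈ u
        · obtain ⟨zr, hzr, hzx⟩ := hu hx'
          rw [Finset.coe_image, Set.mem_image] at hzr
          obtain ⟨z0, hz0S, hz0⟩ := hzr
          rw [Finset.mem_coe] at hz0S
          exact ⟨z0, fun _ => ⟨hz0S, by rw [← realMap_toRealVec, hz0, hzx]⟩⟩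
        · exact ⟨0, fun h => absurd h hx'⟩
      choose p hp using hrep
      set q : (Fin r → ℝ) → (Fin r → ℚ) := fun x' i => ((A.mulVec (p x')) i : ℚ) with hqdef
      have hq : ∀ x' ∈ u, (fun i => ((q x' i : ℝ))) = x' := by
        intro x' hx'
        have := (hp x' hx').2
        funext i
        have h2 := congrFun this i
        simp only [toRealVec] at h2
        rw [hqdef]
        push_cast
        exact h2
      obtain ⟨μ, hμ0, hμ1, hμc⟩ := rat_weights u q hq hAI c hcu
      set m₀ : ℕ := ∏ x' ∈ u, (μ x').den with hm₀
      have hm₀pos : 0 < m₀ := Finset.prod_pos (fun x' _ => (μ x').pos)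
      have hm₀ne : ((m₀ : ℚ)) ≠ 0 := by positivity
      -- integer weights
      have hzint : ∀ x' : Fin r → ℝ, ∃ z : ℤ,
          x' ∈ u → (((z : ℚ)) = μ x' * m₀ ∧ 0 ≤ z) := by
        intro x'
        by_cases hx' : x' ∈ u
        · refine ⟨(μ x').num * (∏ y' ∈ u.erase x', ((μ y').den : ℤ)), fun _ => ⟨?_, ?_⟩⟩
          · have hsplit : m₀ = (μ x').den * ∏ y' ∈ u.erase x', (μ y').den :=
              (Finset.mul_prod_erase u (fun y' => (μ y').den) hx').symm
            rw [hsplit]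
            push_cast
            rw [← mul_assoc, Rat.mul_den_eq_num]
          · apply mul_nonneg
            · exact Rat.num_nonneg.mpr (hμ0 x' hx')
            · exact Finset.prod_nonneg fun y' _ => Int.ofNat_nonneg _
        · exact ⟨0, fun h => absurd h hx'⟩
      choose z hz using hzint
      set w : Fin n → ℤ := ∑ x' ∈ u, (a * z x') • p x' with hwdef
      refine ⟨ha, m₀, hm₀pos, ((m₀ : ℤ) * a, w), ⟨?_, ?_⟩, ?_⟩
      · exact mul_nonneg (by positivity) ha
      · -- cone membership for (m₀ * a, w)
        apply subset_closure
        set x₀ : Fin n → ℝ := ∑ x' ∈ u, ((μ x' : ℝ)) • toRealVec (p x') with hx₀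
        have hx₀P : x₀ ∈ P := by
          rw [hPS]
          have := u.centerMass_mem_convexHull (w := fun x' => ((μ x' : ℝ)))
            (z := fun x' => toRealVec (p x'))
            (fun x' hx' => by
              show (0:ℝ) ≤ ((μ x' : ℝ))
              exact_mod_cast hμ0 x' hx')
            (by
              have : ∑ x' ∈ u, ((μ x' : ℝ)) = 1 := by exact_mod_cast hμ1
              rw [this]; exact one_pos)
            (fun x' hx' => Finset.mem_coe.mpr (Finset.mem_image_of_mem _ (hp x' hx').1))
          rwa [Finset.centerMass_eq_of_sum_1 _ _ (by exact_mod_cast hμ1)] at this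
        refine ⟨((m₀ : ℝ)) * (a : ℝ), mul_nonneg (by positivity) (by exact_mod_cast ha), (1, x₀),
          subset_convexHull ℝ _ ⟨rfl, hx₀P⟩, ?_⟩
        rw [Prod.ext_iff]
        constructor
        · simp [liftReal]
        · simp only [liftReal, Prod.smul_snd]
          funext i
          rw [hwdef]
          simp only [toRealVec, Pi.smul_apply, smul_eq_mul, hx₀, Finset.sum_apply]
          push_cast
          rw [Finset.mul_sum]
          apply Finset.sum_congr rfl
          intro x' hx'
          have hzx : ((z x' : ℚ)) = μ x' * m₀ := (hz x' hx').1
          have hzxr : ((z x' : ℝ)) = ((μ x' : ℝ)) * (m₀ : ℝ) := by exact_mod_cast hzx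
          rw [hzxr]
          ring
      · -- the image equation
        rw [Prod.ext_iff]
        constructor
        · simp
        · simp only [Prod.smul_snd]
          have hAw : ∀ i, A.mulVec w i = ∑ x' ∈ u, (a * z x') * A.mulVec (p x') i := by
            intro i
            rw [hwdef]
            simp only [Matrix.mulVec, dotProduct, Finset.sum_apply, Pi.smul_apply,
              smul_eq_mul, Finset.mul_sum]
            rw [Finset.sum_comm]
            apply Finset.sum_congr rfl
            intro x' _
            apply Finset.sum_congr rfl
            intro j _
            ring
          funext i
          have : (((A.mulVec w) i : ℚ)) = (((m₀ : ℤ) • v) i : ℚ) := by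
            rw [hAw i]
            simp only [Pi.smul_apply, smul_eq_mul]
            push_cast
            have : ∑ x' ∈ u, ((a : ℚ)) * ((z x' : ℚ)) * ((A.mulVec (p x') i : ℚ))
                = ((m₀ : ℚ)) * ((v i : ℚ)) := by
              have hstep : ∀ x' ∈ u, ((a : ℚ)) * ((z x' : ℚ)) * ((A.mulVec (p x') i : ℚ))
                  = ((a : ℚ)) * ((m₀ : ℚ)) * (μ x' * q x' i) := by
                intro x' hx'
                rw [(hz x' hx').1, hqdef]
                ring
              rw [Finset.sum_congr rfl hstep, ← Finset.mul_sum, hμc i, hc]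
              field_simp
            convert this using 2 <;> push_cast <;> ring
          exact_mod_cast this
  done
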